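/- Let n ≥ 1 and κ ≥ 1 be integers, with κ ≥ 2 if p = 2. Let g, ḡ, h ∈ ℤ_p⟦t⟧ with h having constant term 1, and suppose the coefficient of t^i in Y(g) lies in ℤ_p for all 0 ≤ i ≤ n. If every coefficient of ∫(ḡ - g) lies in p^κℤ_p, then Y(ḡ) ≡ Y(g) (mod (p^κ, t^{n+1})), i.e. the coefficient of t^i in Y(ḡ) - Y(g) lies in p^κℤ_p for all 0 ≤ i ≤ n. -/

import Mathlib

open PowerSeries

/-- Composition `h(u)` of formal power series, intended for `u` with zero constant term. -/
noncomputable def pcomp {R : Type*} [CommSemiring R] (h u : R⟦X⟧) : R⟦X⟧ :=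
  PowerSeries.mk fun n => ∑ i ∈ Finset.range (n + 1), coeff i h * coeff n (u ^ i)

/-- Formal integral: the unique `F` with `F' = f` and `F(0) = 0`. -/
noncomputable def pint {K : Type*} [Field K] (f : K⟦X⟧) : K⟦X⟧ :=
  PowerSeries.mk fun n => if n = 0 then 0 else coeff (n - 1) f / (n : K)

namespace Stmt7Aux

open Finset

variable {K : Type*} [Field K]

theorem coeff_derivativeFun (f : K⟦X⟧) (n : ℕ) :
    coeff n (derivativeFun f) = coeff (n + 1) f * (n + 1) :=
  coeff_derivative f n

theorem coeff_pow_eq_zero {u : K⟦X⟧} (hu : constantCoeff u = 0) :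
    ∀ {N m : ℕ}, m < N → coeff m (u ^ N) = 0 := by
  intro N
  induction N with
  | zero => intro m h; omega
  | succ N ih =>
    intro m h
    rw [pow_succ, coeff_mul]
    apply Finset.sum_eq_zero
    rintro ⟨i, j⟩ hij
    rw [Finset.HasAntidiagonal.mem_antidiagonal] at hij
    rcases lt_or_ge i N with hi | hi
    · rw [ih hi, zero_mul]
    · have hj : j = 0 := by omega
      subst hj
      rw [coeff_zero_eq_constantCoeff, hu, mul_zero]

theorem coeff_pcomp (F u : K⟦X⟧) (m : ℕ) :
    coeff m (pcomp F u) = ∑ N ∈ range (m + 1), coeff N F * coeff m (u ^ N) := by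
  simp [pcomp, coeff_mk]

theorem coeff_pcomp_ext {u : K⟦X⟧} (hu : constantCoeff u = 0) (F : K⟦X⟧) {m M : ℕ}
    (hM : m < M) :
    coeff m (pcomp F u) = ∑ N ∈ range M, coeff N F * coeff m (u ^ N) := by
  rw [coeff_pcomp]
  apply Finset.sum_subset (Finset.range_subset_range.2 hM)
  intro N hN hN2
  simp only [mem_range] at hN hN2
  rw [coeff_pow_eq_zero hu (by omega), mul_zero]

theorem constantCoeff_pcomp (F u : K⟦X⟧) :
    constantCoeff (pcomp F u) = coeff 0 F := by
  rw [← coeff_zero_eq_constantCoeff, coeff_pcomp]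
  simp

theorem sum_triangle (m : ℕ) (f : ℕ → ℕ → K)
    (hf : ∀ a b, a ≤ m → b ≤ m → m < a + b → f a b = 0) :
    ∑ N ∈ range (m + 1), ∑ a ∈ range (N + 1), f a (N - a)
      = ∑ a ∈ range (m + 1), ∑ b ∈ range (m + 1), f a b := by
  rw [Finset.sum_sigma', ← Finset.sum_product']
  rw [← Finset.sum_filter_of_ne
    (p := fun x : ℕ × ℕ => x.1 + x.2 ≤ m)
    (fun x hx hne => by
      by_contra hc
      simp only [mem_product, mem_range] at hx
      exact hne (hf x.1 x.2 (by omega) (by omega) (by omega)))]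
  refine Finset.sum_nbij' (fun x => (x.2, x.1 - x.2)) (fun y => ⟨y.1 + y.2, y.1⟩) ?_ ?_ ?_ ?_ ?_
  · rintro ⟨N, a⟩ hx
    simp only [mem_sigma, mem_range, mem_filter, mem_product] at hx ⊢
    omega
  · rintro ⟨a, b⟩ hy
    simp only [mem_sigma, mem_range, mem_filter, mem_product] at hy ⊢
    omega
  · rintro ⟨N, a⟩ hx
    simp only [mem_sigma, mem_range] at hx
    simp only []
    congr 1 <;> omega
  · rintro ⟨a, b⟩ hy
    simp only [mem_filter, mem_product, mem_range] at hy
    simp only []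
    congr 1 <;> omega
  · rintro ⟨N, a⟩ hx
    rfl


theorem pcomp_mul {u : K⟦X⟧} (hu : constantCoeff u = 0) (F G : K⟦X⟧) :
    pcomp (F * G) u = pcomp F u * pcomp G u := by
  ext m
  have hL : coeff m (pcomp (F * G) u)
      = ∑ N ∈ range (m + 1), ∑ a ∈ range (N + 1),
          (fun a b => coeff a F * coeff b G * coeff m (u ^ (a + b))) a (N - a) := by
    rw [coeff_pcomp]
    refine Finset.sum_congr rfl fun N hN => ?_
    rw [coeff_mul, Finset.Nat.sum_antidiagonal_eq_sum_range_succ_mk, Finset.sum_mul]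
    refine Finset.sum_congr rfl fun a ha => ?_
    simp only [mem_range] at ha
    simp only [Nat.add_sub_cancel' (show a ≤ N by omega)]
  have hR : coeff m (pcomp F u * pcomp G u)
      = ∑ a ∈ range (m + 1), ∑ b ∈ range (m + 1),
          coeff a F * coeff b G * coeff m (u ^ (a + b)) := by
    rw [coeff_mul]
    have h1 : ∀ x : ℕ × ℕ, x ∈ Finset.HasAntidiagonal.antidiagonal m →
        coeff x.1 (pcomp F u) * coeff x.2 (pcomp G u)
          = ∑ a ∈ range (m + 1), ∑ b ∈ range (m + 1),
              coeff a F * coeff b G * (coeff x.1 (u ^ a) * coeff x.2 (u ^ b)) := by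
      rintro ⟨i, j⟩ hij
      rw [Finset.HasAntidiagonal.mem_antidiagonal] at hij
      rw [coeff_pcomp_ext hu F (show i < m + 1 by omega),
        coeff_pcomp_ext hu G (show j < m + 1 by omega), Finset.sum_mul_sum]
      refine Finset.sum_congr rfl fun a _ => Finset.sum_congr rfl fun b _ => by ring
    rw [Finset.sum_congr rfl h1, Finset.sum_comm]
    refine Finset.sum_congr rfl fun a _ => ?_
    rw [Finset.sum_comm]
    refine Finset.sum_congr rfl fun b _ => ?_
    rw [← Finset.mul_sum, ← coeff_mul, ← pow_add]
  rw [hL, hR]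
  exact sum_triangle m (fun a b => coeff a F * coeff b G * coeff m (u ^ (a + b)))
    (fun a b _ _ hab => by
      show coeff a F * coeff b G * coeff m (u ^ (a + b)) = 0
      rw [coeff_pow_eq_zero hu hab, mul_zero])

theorem pcomp_one (u : K⟦X⟧) : pcomp (1 : K⟦X⟧) u = 1 := by
  ext m
  rw [coeff_pcomp]
  rw [Finset.sum_eq_single 0]
  · simp
  · intro N _ hN
    rw [coeff_one, if_neg hN, zero_mul]
  · intro hm
    simp at hm

theorem derivativeFun_pow (u : K⟦X⟧) (N : ℕ) :
    derivativeFun (u ^ (N + 1)) = (N + 1 : K⟦X⟧) * (u ^ N * derivativeFun u) := by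
  induction N with
  | zero => simp [pow_one]
  | succ N ih =>
    rw [pow_succ, derivativeFun_mul, smul_eq_mul, smul_eq_mul, ih]
    push_cast
    ring

theorem pcomp_deriv {u : K⟦X⟧} (hu : constantCoeff u = 0) (F : K⟦X⟧) :
    derivativeFun (pcomp F u) = derivativeFun u * pcomp (derivativeFun F) u := by
  ext m
  rw [coeff_derivativeFun, coeff_pcomp_ext hu F (show m + 1 < m + 2 by omega)]
  have hR : coeff m (derivativeFun u * pcomp (derivativeFun F) u)
      = ∑ N ∈ range (m + 1),
          coeff N (derivativeFun F) * coeff m (derivativeFun u * u ^ N) := by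
    rw [coeff_mul]
    have h1 : ∀ x : ℕ × ℕ, x ∈ Finset.HasAntidiagonal.antidiagonal m →
        coeff x.1 (derivativeFun u) * coeff x.2 (pcomp (derivativeFun F) u)
          = ∑ N ∈ range (m + 1),
              coeff N (derivativeFun F) * (coeff x.1 (derivativeFun u) * coeff x.2 (u ^ N)) := by
      rintro ⟨i, j⟩ hij
      rw [Finset.HasAntidiagonal.mem_antidiagonal] at hij
      rw [coeff_pcomp_ext hu _ (show j < m + 1 by omega), Finset.mul_sum]
      refine Finset.sum_congr rfl fun N _ => by ring
    rw [Finset.sum_congr rfl h1, Finset.sum_comm]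
    refine Finset.sum_congr rfl fun N _ => ?_
    rw [← Finset.mul_sum, ← coeff_mul]
  rw [hR, Finset.sum_mul, Finset.sum_range_succ' _ (m + 1)]
  have h0 : coeff 0 F * coeff (m + 1) (u ^ 0) * (m + 1 : K) = 0 := by
    rw [pow_zero, coeff_one, if_neg (by omega : ¬ m + 1 = 0)]
    ring
  rw [h0, add_zero]
  refine Finset.sum_congr rfl fun N _ => ?_
  have key : coeff m (derivativeFun (u ^ (N + 1)))
      = coeff m ((N + 1 : K⟦X⟧) * (u ^ N * derivativeFun u)) := by
    rw [derivativeFun_pow]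
  rw [coeff_derivativeFun] at key
  have hcast : ((N : K⟦X⟧) + 1) = C ((N : K) + 1) := by
    rw [map_add, map_natCast, map_one]
  rw [hcast, ← smul_eq_C_mul, map_smul, smul_eq_mul] at key
  rw [coeff_derivativeFun, mul_assoc, key, mul_comm (u ^ N)]
  ring


theorem coeff_pint (f : K⟦X⟧) (m : ℕ) :
    coeff m (pint f) = if m = 0 then 0 else coeff (m - 1) f / (m : K) := by
  simp [pint, coeff_mk]

theorem constantCoeff_pint (f : K⟦X⟧) : constantCoeff (pint f) = 0 := by
  rw [← coeff_zero_eq_constantCoeff, coeff_pint]; simp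

theorem derivativeFun_pint [CharZero K] (f : K⟦X⟧) : derivativeFun (pint f) = f := by
  ext m
  rw [coeff_derivativeFun, coeff_pint, if_neg (by omega : ¬ m + 1 = 0)]
  have : ((m : K) + 1) ≠ 0 := Nat.cast_add_one_ne_zero m
  field_simp
  simp only [Nat.add_sub_cancel, Nat.cast_add, Nat.cast_one]; ring

theorem eq_of_deriv_eq [CharZero K] {F G : K⟦X⟧}
    (h : derivativeFun F = derivativeFun G)
    (h0 : constantCoeff F = constantCoeff G) : F = G := by
  ext m
  cases m with
  | zero => simpa [coeff_zero_eq_constantCoeff] using h0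
  | succ m =>
    have := congrArg (coeff m) h
    rw [coeff_derivativeFun, coeff_derivativeFun] at this
    have hm : ((m : K) + 1) ≠ 0 := Nat.cast_add_one_ne_zero m
    exact mul_right_cancel₀ hm this

/-- `L(y) = ∫ g` when `y' = g·h(y)`, `y(0)=0`, with `L = ∫ h⁻¹`. -/
theorem pcomp_pint_eq [CharZero K] {g h y : K⟦X⟧} (hh : constantCoeff h ≠ 0)
    (hy0 : constantCoeff y = 0) (hy : derivativeFun y = g * pcomp h y) :
    pcomp (pint h⁻¹) y = pint g := by
  apply eq_of_deriv_eq
  · rw [pcomp_deriv hy0, derivativeFun_pint, derivativeFun_pint, hy,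
      mul_assoc, ← pcomp_mul hy0, PowerSeries.mul_inv_cancel h hh, pcomp_one, mul_one]
  · rw [constantCoeff_pcomp]
    simp [coeff_pint, constantCoeff_pint]

theorem coeff_iter_deriv (F : K⟦X⟧) (k a : ℕ) :
    coeff a (derivativeFun^[k] F)
      = (((a + k).choose k * k.factorial : ℕ) : K) * coeff (a + k) F := by
  induction k generalizing F with
  | zero => simp
  | succ k ih =>
    rw [Function.iterate_succ_apply, ih (derivativeFun F), coeff_derivativeFun]
    have hnat : (a + (k + 1)).choose (k + 1) * (k + 1).factorial
        = ((a + k).choose k * k.factorial) * (a + k + 1) := by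
      have h1 := Nat.add_one_mul_choose_eq (a + k) k
      rw [Nat.factorial_succ]
      have : a + (k + 1) = (a + k) + 1 := by omega
      rw [this]
      calc (a + k + 1).choose (k + 1) * ((k + 1) * k.factorial)
          = ((a + k + 1).choose (k + 1) * (k + 1)) * k.factorial := by ring
        _ = ((a + k + 1) * (a + k).choose k) * k.factorial := by
            rw [← h1]
        _ = (a + k).choose k * k.factorial * (a + k + 1) := by ring
    rw [hnat]
    push_cast
    have : a + (k + 1) = a + k + 1 := by omega
    rw [this]
    ring

theorem coeff_mul_pow_eq_zero {u v : K⟦X⟧} (hu : constantCoeff u = 0)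
    (hv : constantCoeff v = 0) {a k m : ℕ} (hm : m < a + k) :
    coeff m (u ^ a * v ^ k) = 0 := by
  rw [coeff_mul]
  apply Finset.sum_eq_zero
  rintro ⟨i, j⟩ hij
  rw [Finset.HasAntidiagonal.mem_antidiagonal] at hij
  rcases lt_or_ge i a with hi | hi
  · rw [coeff_pow_eq_zero hu hi, zero_mul]
  · rw [coeff_pow_eq_zero hv (by omega), mul_zero]

theorem coeff_pcomp_mul {u : K⟦X⟧} (hu : constantCoeff u = 0) (G w : K⟦X⟧) (m : ℕ) :
    coeff m (pcomp G u * w)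
      = ∑ a ∈ range (m + 1), coeff a G * coeff m (u ^ a * w) := by
  rw [coeff_mul]
  have h1 : ∀ x : ℕ × ℕ, x ∈ Finset.HasAntidiagonal.antidiagonal m →
      coeff x.1 (pcomp G u) * coeff x.2 w
        = ∑ a ∈ range (m + 1), coeff a G * (coeff x.1 (u ^ a) * coeff x.2 w) := by
    rintro ⟨i, j⟩ hij
    rw [Finset.HasAntidiagonal.mem_antidiagonal] at hij
    rw [coeff_pcomp_ext hu G (show i < m + 1 by omega), Finset.sum_mul]
    refine Finset.sum_congr rfl fun a _ => by ring
  rw [Finset.sum_congr rfl h1, Finset.sum_comm]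
  refine Finset.sum_congr rfl fun a _ => ?_
  rw [← Finset.mul_sum, ← coeff_mul]

/-- Taylor expansion of a composition. -/
theorem taylor_coeff [CharZero K] {u v : K⟦X⟧} (hu : constantCoeff u = 0)
    (hv : constantCoeff v = 0) (F : K⟦X⟧) (m : ℕ) :
    coeff m (pcomp F (u + v))
      = ∑ k ∈ range (m + 1),
          (k.factorial : K)⁻¹ * coeff m (pcomp (derivativeFun^[k] F) u * v ^ k) := by
  have huv : constantCoeff (u + v) = 0 := by rw [map_add, hu, hv, add_zero]
  have hL : coeff m (pcomp F (u + v))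
      = ∑ N ∈ range (m + 1), ∑ k ∈ range (N + 1),
          (fun x y => (((x + y).choose y : ℕ) : K) * coeff (x + y) F
            * coeff m (u ^ x * v ^ y)) k (N - k) := by
    rw [coeff_pcomp]
    refine Finset.sum_congr rfl fun N hN => ?_
    rw [add_pow, map_sum, Finset.mul_sum]
    refine Finset.sum_congr rfl fun k hk => ?_
    simp only [mem_range] at hk
    have hkN : k ≤ N := by omega
    simp only [Nat.add_sub_cancel' hkN]
    rw [show ((N.choose k : ℕ) : K⟦X⟧) = C ((N.choose k : ℕ) : K) from
      (map_natCast C _).symm, coeff_mul_C, Nat.choose_symm hkN]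
    ring
  have hT := sum_triangle m
    (fun x y => (((x + y).choose y : ℕ) : K) * coeff (x + y) F * coeff m (u ^ x * v ^ y))
    (fun x y _ _ hxy => by
      show (((x + y).choose y : ℕ) : K) * coeff (x + y) F * coeff m (u ^ x * v ^ y) = 0
      rw [coeff_mul_pow_eq_zero hu hv hxy, mul_zero])
  rw [hL, hT, Finset.sum_comm]
  refine Finset.sum_congr rfl fun k _ => ?_
  rw [coeff_pcomp_mul hu, Finset.mul_sum]
  refine Finset.sum_congr rfl fun a _ => ?_
  rw [coeff_iter_deriv]
  have hfact : (k.factorial : K) ≠ 0 := by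
    exact_mod_cast Nat.factorial_ne_zero k
  show (((a + k).choose k : ℕ) : K) * coeff (a + k) F * coeff m (u ^ a * v ^ k)
      = (k.factorial : K)⁻¹
        * ((((a + k).choose k * k.factorial : ℕ) : K) * coeff (a + k) F
            * coeff m (u ^ a * v ^ k))
  push_cast
  field_simp


section Padic

variable {p : ℕ} [hp : Fact p.Prime]

theorem norm_sum_le_of_le {ι : Type*} (s : Finset ι) (f : ι → ℚ_[p]) {C : ℝ}
    (hC : 0 ≤ C) (h : ∀ i ∈ s, ‖f i‖ ≤ C) : ‖∑ i ∈ s, f i‖ ≤ C := by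
  classical
  induction s using Finset.induction_on with
  | empty => simpa using hC
  | insert x s hx ih =>
    rw [Finset.sum_insert hx]
    exact le_trans (Padic.nonarchimedean _ _)
      (max_le (h _ (Finset.mem_insert_self _ _))
        (ih fun i hi => h i (Finset.mem_insert_of_mem hi)))

theorem coeff_pow_norm_le_one {y : ℚ_[p]⟦X⟧} {n : ℕ}
    (hy : ∀ i ≤ n, ‖coeff i y‖ ≤ 1) :
    ∀ N, ∀ i ≤ n, ‖coeff i (y ^ N)‖ ≤ 1 := by
  intro N
  induction N with
  | zero =>
    intro i _
    rw [pow_zero, coeff_one]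
    split <;> simp
  | succ N ih =>
    intro i hi
    rw [pow_succ, coeff_mul]
    apply norm_sum_le_of_le _ _ zero_le_one
    rintro ⟨a, b⟩ hab
    rw [Finset.HasAntidiagonal.mem_antidiagonal] at hab
    rw [norm_mul]
    exact mul_le_one₀ (ih a (by omega)) (norm_nonneg _) (hy b (by omega))

theorem coeff_pcomp_norm_le_one {G y : ℚ_[p]⟦X⟧} {n : ℕ}
    (hG : ∀ i, ‖coeff i G‖ ≤ 1) (hy : ∀ i ≤ n, ‖coeff i y‖ ≤ 1) :
    ∀ i ≤ n, ‖coeff i (pcomp G y)‖ ≤ 1 := by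
  intro i hi
  rw [coeff_pcomp]
  apply norm_sum_le_of_le _ _ zero_le_one
  intro N _
  rw [norm_mul]
  exact mul_le_one₀ (hG N) (norm_nonneg _) (coeff_pow_norm_le_one hy N i hi)

theorem inv_int {h : ℚ_[p]⟦X⟧} (hh1 : constantCoeff h = 1)
    (hint : ∀ i, ‖coeff i h‖ ≤ 1) : ∀ i, ‖coeff i h⁻¹‖ ≤ 1 := by
  intro i
  induction i using Nat.strong_induction_on with
  | _ i ih =>
    rw [PowerSeries.coeff_inv]
    split
    · rw [hh1, inv_one, norm_one]
    · rw [hh1, inv_one, neg_one_mul, norm_neg]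
      apply norm_sum_le_of_le _ _ zero_le_one
      rintro ⟨a, b⟩ hab
      rw [Finset.HasAntidiagonal.mem_antidiagonal] at hab
      split
      · rw [norm_mul]
        exact mul_le_one₀ (hint a) (norm_nonneg _) (ih b (by omega))
      · simp

theorem deriv_int {G : ℚ_[p]⟦X⟧} (hG : ∀ i, ‖coeff i G‖ ≤ 1) :
    ∀ i, ‖coeff i (derivativeFun G)‖ ≤ 1 := by
  intro i
  rw [coeff_derivativeFun, norm_mul]
  have hn : ‖((i : ℚ_[p]) + 1)‖ ≤ 1 := by
    have h2 := Padic.norm_int_le_one (p := p) ((i : ℤ) + 1)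
    push_cast at h2
    exact h2
  exact mul_le_one₀ (hG _) (norm_nonneg _) hn

theorem iter_deriv_int {G : ℚ_[p]⟦X⟧} (hG : ∀ i, ‖coeff i G‖ ≤ 1) :
    ∀ k i, ‖coeff i (derivativeFun^[k] G)‖ ≤ 1 := by
  intro k
  induction k with
  | zero => simpa using hG
  | succ k ih =>
    intro i
    rw [Function.iterate_succ_apply']
    exact deriv_int ih i

theorem coeff_pow_norm {v : ℚ_[p]⟦X⟧} (hv0 : constantCoeff v = 0) {m : ℕ} {c : ℝ}
    (hc0 : 0 ≤ c) (hb : ∀ l, l < m → ‖coeff l v‖ ≤ c) :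
    ∀ k, 2 ≤ k → ∀ j ≤ m, ‖coeff j (v ^ k)‖ ≤ c ^ k := by
  intro k hk
  induction k, hk using Nat.le_induction with
  | base =>
    intro j hj
    rw [pow_two, coeff_mul]
    apply norm_sum_le_of_le _ _ (by positivity)
    rintro ⟨a, b⟩ hab
    rw [Finset.HasAntidiagonal.mem_antidiagonal] at hab
    rcases Nat.eq_zero_or_pos a with rfl | ha
    · rw [coeff_zero_eq_constantCoeff_apply, hv0, zero_mul, norm_zero]; positivity
    rcases Nat.eq_zero_or_pos b with rfl | hbpos
    · rw [coeff_zero_eq_constantCoeff_apply, hv0, mul_zero, norm_zero]; positivity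
    rw [norm_mul, pow_two]
    exact mul_le_mul (hb a (by omega)) (hb b (by omega)) (norm_nonneg _) hc0
  | succ k hk ih =>
    intro j hj
    rw [pow_succ, coeff_mul]
    apply norm_sum_le_of_le _ _ (by positivity)
    rintro ⟨a, b⟩ hab
    rw [Finset.HasAntidiagonal.mem_antidiagonal] at hab
    rcases Nat.eq_zero_or_pos b with rfl | hbpos
    · rw [coeff_zero_eq_constantCoeff_apply, hv0, mul_zero, norm_zero]; positivity
    rcases Nat.eq_zero_or_pos a with rfl | ha
    · have : constantCoeff (v ^ k) = 0 := by
        rw [map_pow, hv0, zero_pow (by omega)]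
      rw [coeff_zero_eq_constantCoeff_apply, this, zero_mul, norm_zero]; positivity
    rw [norm_mul, pow_succ]
    exact mul_le_mul (ih a (by omega)) (hb b (by omega)) (norm_nonneg _) (by positivity)

theorem norm_factorial_inv_le (k : ℕ) (hk : 1 ≤ k) :
    ‖((k.factorial : ℚ_[p]))⁻¹‖ ≤ (p : ℝ) ^ ((k : ℤ) - 1) := by
  have hk0 : k ≠ 0 := by omega
  have hp2 : 2 ≤ p := hp.out.two_le
  have hs : 1 ≤ (p.digits k).sum := by
    have hne : p.digits k ≠ [] := Nat.digits_ne_nil_iff_ne_zero.mpr hk0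
    have hlast := Nat.getLast_digit_ne_zero p hk0
    exact le_trans (Nat.one_le_iff_ne_zero.2 hlast)
      (List.single_le_sum (fun x _ => Nat.zero_le x) _ (List.getLast_mem hne))
  have hval : padicValNat p (k.factorial) ≤ k - 1 := by
    have h1 := sub_one_mul_padicValNat_factorial (p := p) k
    have h2 : padicValNat p (k.factorial) ≤ (p - 1) * padicValNat p (k.factorial) :=
      Nat.le_mul_of_pos_left _ (by omega)
    omega
  have hfne : ((k.factorial : ℕ) : ℚ_[p]) ≠ 0 := by
    exact_mod_cast Nat.factorial_ne_zero k
  rw [norm_inv, Padic.norm_eq_zpow_neg_valuation hfne, Padic.valuation_natCast, ← zpow_neg, neg_neg]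
  apply zpow_le_zpow_right₀ (by exact_mod_cast Nat.one_le_iff_ne_zero.2 hp.out.ne_zero : (1:ℝ) ≤ p)
  omega

theorem norm_sub_le_max (a b : ℚ_[p]) : ‖a - b‖ ≤ max ‖a‖ ‖b‖ := by
  rw [sub_eq_add_neg]
  refine le_trans (Padic.nonarchimedean _ _) ?_
  rw [norm_neg]

end Padic

end Stmt7Aux

open Stmt7Aux

/-- if `∫(ḡ - g)` has all coefficients in `p^κ ℤ_p`, then
`Y(ḡ) ≡ Y(g) (mod (p^κ, t^{n+1}))`.  Membership `x ∈ p^κ ℤ_p` is expressed as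
`‖x‖ ≤ p^{-κ}`, and `f ∈ ℤ_p⟦t⟧` as `‖coeff i f‖ ≤ 1` for all `i`. -/
theorem stmt7 (p : ℕ) [hp : Fact p.Prime] (n κ : ℕ) (hn : 1 ≤ n) (hκ : 1 ≤ κ)
    (hκ2 : p = 2 → 2 ≤ κ)
    (g gbar h : PowerSeries ℚ_[p])
    (hg : ∀ i, ‖coeff i g‖ ≤ 1) (hgbar : ∀ i, ‖coeff i gbar‖ ≤ 1)
    (hhint : ∀ i, ‖coeff i h‖ ≤ 1) (hh1 : constantCoeff h = 1)
    (y ybar : PowerSeries ℚ_[p])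
    (hy0 : constantCoeff y = 0) (hy : derivativeFun y = g * pcomp h y)
    (hybar0 : constantCoeff ybar = 0) (hybar : derivativeFun ybar = gbar * pcomp h ybar)
    (hyint : ∀ i ≤ n, ‖coeff i y‖ ≤ 1)
    (hdiff : ∀ i, ‖coeff i (pint (gbar - g))‖ ≤ (p : ℝ) ^ (-(κ : ℤ))) :
    ∀ i ≤ n, ‖coeff i (ybar - y)‖ ≤ (p : ℝ) ^ (-(κ : ℤ)) := by
  classical
  have hp1 : (1 : ℝ) ≤ (p : ℝ) := by
    exact_mod_cast Nat.one_le_iff_ne_zero.2 hp.out.ne_zero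
  have hC0 : (0:ℝ) ≤ (p : ℝ) ^ (-(κ : ℤ)) := by positivity
  have hh0 : constantCoeff h ≠ 0 := by rw [hh1]; exact one_ne_zero
  have hδ0 : constantCoeff (ybar - y) = 0 := by rw [map_sub, hybar0, hy0, sub_zero]
  have hinv_int : ∀ i, ‖coeff i h⁻¹‖ ≤ 1 := inv_int hh1 hhint
  have hLy : pcomp (pint h⁻¹) y = pint g := pcomp_pint_eq hh0 hy0 hy
  have hLybar : pcomp (pint h⁻¹) ybar = pint gbar := pcomp_pint_eq hh0 hybar0 hybar
  have hdk_int : ∀ k, 1 ≤ k → ∀ i,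
      ‖coeff i (derivativeFun^[k] (pint h⁻¹))‖ ≤ 1 := by
    intro k hk i
    obtain ⟨k', rfl⟩ : ∃ k', k = k' + 1 := ⟨k - 1, by omega⟩
    rw [Function.iterate_succ_apply, derivativeFun_pint]
    exact iter_deriv_int hinv_int k' i
  have hident : ∀ m : ℕ, coeff m (pint (gbar - g))
      = ∑ k ∈ Finset.Ico 1 (m + 1),
          (k.factorial : ℚ_[p])⁻¹
            * coeff m (pcomp (derivativeFun^[k] (pint h⁻¹)) y * (ybar - y) ^ k) := by
    intro m
    have hsplit : coeff m (pint (gbar - g))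
        = coeff m (pint gbar) - coeff m (pint g) := by
      rw [coeff_pint, coeff_pint, coeff_pint]
      split_ifs with hm
      · simp
      · rw [map_sub, sub_div]
    have hybar_eq : ybar = y + (ybar - y) := by ring
    have htay := taylor_coeff hy0 hδ0 (pint h⁻¹) m
    rw [← hybar_eq, hLybar] at htay
    rw [hsplit, htay, Finset.range_eq_Ico,
      Finset.sum_eq_sum_Ico_succ_bot (by omega : 0 < m + 1)]
    simp only [Function.iterate_zero, id_eq, Nat.factorial_zero, Nat.cast_one, inv_one,
      pow_zero, mul_one, one_mul, hLy]
    ring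
  have main : ∀ m, m ≤ n → ‖coeff m (ybar - y)‖ ≤ (p : ℝ) ^ (-(κ : ℤ)) := by
    intro m
    induction m using Nat.strong_induction_on with
    | _ m IH =>
      intro hm
      rcases Nat.eq_zero_or_pos m with rfl | hm0
      · rw [coeff_zero_eq_constantCoeff_apply, hδ0, norm_zero]; exact hC0
      have hid := hident m
      rw [Finset.sum_eq_sum_Ico_succ_bot (by omega : 1 < m + 1)] at hid
      have hc0 : coeff 0 (pcomp h⁻¹ y) = 1 := by
        rw [coeff_zero_eq_constantCoeff_apply, constantCoeff_pcomp,
          coeff_zero_eq_constantCoeff_apply, PowerSeries.constantCoeff_inv, hh1, inv_one]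
      have h1t : (Nat.factorial 1 : ℚ_[p])⁻¹
            * coeff m (pcomp (derivativeFun^[1] (pint h⁻¹)) y * (ybar - y) ^ 1)
          = coeff m (ybar - y)
            + ∑ x ∈ (Finset.HasAntidiagonal.antidiagonal m).erase ((0 : ℕ), m),
                coeff x.1 (pcomp h⁻¹ y) * coeff x.2 (ybar - y) := by
        rw [Nat.factorial_one, Nat.cast_one, inv_one, one_mul, pow_one,
          Function.iterate_one, derivativeFun_pint, coeff_mul,
          ← Finset.add_sum_erase _ _ (show ((0:ℕ), m) ∈ Finset.HasAntidiagonal.antidiagonal m by simp)]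
        congr 1
        rw [hc0, one_mul]
      rw [h1t] at hid
      have hδm : coeff m (ybar - y)
          = coeff m (pint (gbar - g))
            - (∑ x ∈ (Finset.HasAntidiagonal.antidiagonal m).erase ((0 : ℕ), m),
                coeff x.1 (pcomp h⁻¹ y) * coeff x.2 (ybar - y))
            - ∑ k ∈ Finset.Ico 2 (m + 1),
                (k.factorial : ℚ_[p])⁻¹
                  * coeff m (pcomp (derivativeFun^[k] (pint h⁻¹)) y * (ybar - y) ^ k) := by
        rw [hid]; ring
      have hE : ‖∑ x ∈ (Finset.HasAntidiagonal.antidiagonal m).erase ((0 : ℕ), m),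
          coeff x.1 (pcomp h⁻¹ y) * coeff x.2 (ybar - y)‖
            ≤ (p:ℝ)^(-(κ:ℤ)) := by
        apply norm_sum_le_of_le _ _ hC0
        rintro ⟨a, b⟩ hab
        rw [Finset.mem_erase, Finset.HasAntidiagonal.mem_antidiagonal] at hab
        obtain ⟨hne, hab⟩ := hab
        have hb : b < m := by
          rcases Nat.lt_or_ge b m with hlt | hge
          · exact hlt
          · exfalso
            apply hne
            have hbm : b = m := by omega
            have ham : a = 0 := by omega
            rw [ham, hbm]
        rw [norm_mul]
        calc ‖coeff a (pcomp h⁻¹ y)‖ * ‖coeff b (ybar - y)‖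
            ≤ 1 * ((p:ℝ)^(-(κ:ℤ))) := mul_le_mul
              (coeff_pcomp_norm_le_one hinv_int hyint a (by omega))
              (IH b hb (by omega)) (norm_nonneg _) zero_le_one
          _ = _ := one_mul _
      have hS : ∀ k ∈ Finset.Ico 2 (m + 1),
          ‖(k.factorial : ℚ_[p])⁻¹
            * coeff m (pcomp (derivativeFun^[k] (pint h⁻¹)) y * (ybar - y) ^ k)‖
            ≤ (p:ℝ)^(-(κ:ℤ)) := by
        intro k hk
        rw [Finset.mem_Ico] at hk
        rw [norm_mul]
        have hc1 : ‖coeff m (pcomp (derivativeFun^[k] (pint h⁻¹)) y * (ybar - y) ^ k)‖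
            ≤ ((p:ℝ)^(-(κ:ℤ)))^k := by
          rw [coeff_mul]
          apply norm_sum_le_of_le _ _ (by positivity)
          rintro ⟨a, b⟩ hab
          rw [Finset.HasAntidiagonal.mem_antidiagonal] at hab
          rw [norm_mul]
          calc ‖coeff a (pcomp (derivativeFun^[k] (pint h⁻¹)) y)‖
                * ‖coeff b ((ybar - y) ^ k)‖
              ≤ 1 * ((p:ℝ)^(-(κ:ℤ)))^k := mul_le_mul
                (coeff_pcomp_norm_le_one (hdk_int k (by omega)) hyint a (by omega))
                (coeff_pow_norm hδ0 hC0 (fun l hl => IH l hl (by omega)) k (by omega) b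
                  (by omega))
                (norm_nonneg _) zero_le_one
            _ = _ := one_mul _
        calc ‖(k.factorial : ℚ_[p])⁻¹‖
              * ‖coeff m (pcomp (derivativeFun^[k] (pint h⁻¹)) y * (ybar - y) ^ k)‖
            ≤ (p:ℝ)^((k:ℤ)-1) * ((p:ℝ)^(-(κ:ℤ)))^k :=
              mul_le_mul (norm_factorial_inv_le k (by omega)) hc1 (norm_nonneg _)
                (by positivity)
          _ ≤ (p:ℝ)^(-(κ:ℤ)) := by
              have h1 : ((p:ℝ)^(-(κ:ℤ)))^(k:ℕ) = (p:ℝ)^((-(κ:ℤ))*k) := by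
                rw [← zpow_natCast ((p:ℝ)^(-(κ:ℤ))) k, ← zpow_mul]
              rw [h1, ← zpow_add₀ (by positivity : (p:ℝ) ≠ 0)]
              apply zpow_le_zpow_right₀ hp1
              have hκ' : (1:ℤ) ≤ (κ:ℤ) := by exact_mod_cast hκ
              have hk' : (2:ℤ) ≤ (k:ℤ) := by exact_mod_cast hk.1
              have key : (0:ℤ) ≤ ((κ:ℤ) - 1) * ((k:ℤ) - 1) :=
                mul_nonneg (by omega) (by omega)
              nlinarith [key]
      have hSsum : ‖∑ k ∈ Finset.Ico 2 (m + 1),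
          (k.factorial : ℚ_[p])⁻¹
            * coeff m (pcomp (derivativeFun^[k] (pint h⁻¹)) y * (ybar - y) ^ k)‖
            ≤ (p:ℝ)^(-(κ:ℤ)) := norm_sum_le_of_le _ _ hC0 hS
      rw [hδm]
      exact le_trans (norm_sub_le_max _ _)
        (max_le (le_trans (norm_sub_le_max _ _) (max_le (hdiff m) hE)) hSsum)
  exact main
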